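/- If a graph is (d,Δ)-degenerate, then it is (Δ(d-1)+1)-arrangeable. -/

import Mathlib

/-- A graph `G` is `(d,Δ)`-degenerate if there is an ordering `v_1,…,v_n` of its vertices such
that each `v_i` has at most `d` neighbors `v_j` with `j < i`, and there are at most `Δ` distinct
sets `S ⊆ {v_1,…,v_i}` of the form `S = N(v_j) ∩ {v_1,…,v_i}` for some neighbor `v_j` of `v_i`
with `j > i`. -/
def DDeltaDegenerate {V : Type*} [Fintype V] (G : SimpleGraph V) (d Δ : ℕ) : Prop :=
  ∃ f : Fin (Fintype.card V) ≃ V, ∀ i : Fin (Fintype.card V),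
    {j : Fin (Fintype.card V) | j < i ∧ G.Adj (f j) (f i)}.ncard ≤ d ∧
    {S : Set V | ∃ j : Fin (Fintype.card V), i < j ∧ G.Adj (f j) (f i) ∧
        S = {v : V | G.Adj (f j) v ∧ f.symm v ≤ i}}.ncard ≤ Δ

/-- A graph `G` is `p`-arrangeable if there is an ordering `v_1,…,v_n` of its vertices such that
for each `i`, the neighbors of `v_i` among `{v_{i+1},…,v_n}` have together at most `p`
neighbors in `{v_1,…,v_i}` (including `v_i`). -/
def Arrangeable {V : Type*} [Fintype V] (G : SimpleGraph V) (p : ℕ) : Prop :=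
  ∃ f : Fin (Fintype.card V) ≃ V, ∀ i : Fin (Fintype.card V),
    {v : V | f.symm v ≤ i ∧ ∃ j : Fin (Fintype.card V),
        i < j ∧ G.Adj (f i) (f j) ∧ G.Adj (f j) v}.ncard ≤ p

/-- If a graph is `(d,Δ)`-degenerate, then it is `(Δ(d-1)+1)`-arrangeable. -/

lemma ncard_sUnion_le' {V : Type*} (𝒮 : Set (Set V)) (hfin : 𝒮.Finite) :
    ∀ m : ℕ, (∀ S ∈ 𝒮, S.ncard ≤ m) → (⋃₀ 𝒮).ncard ≤ 𝒮.ncard * m := by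
  refine Set.Finite.induction_on _ hfin
    (motive := fun 𝒮 _ => ∀ m : ℕ, (∀ S ∈ 𝒮, S.ncard ≤ m) → (⋃₀ 𝒮).ncard ≤ 𝒮.ncard * m) (by simp) ?_
  intro S 𝒮 hS h𝒮 ih m hm
  rw [Set.sUnion_insert]
  calc (S ∪ ⋃₀ 𝒮).ncard ≤ S.ncard + (⋃₀ 𝒮).ncard := Set.ncard_union_le _ _
    _ ≤ m + 𝒮.ncard * m := by
        gcongr
        · exact hm S (Set.mem_insert _ _)
        · exact ih m fun T hT => hm T (Set.mem_insert_of_mem _ hT)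
    _ ≤ (insert S 𝒮).ncard * m := by
        rw [Set.ncard_insert_of_notMem hS h𝒮, add_mul, one_mul, add_comm]

theorem stmt_2 {V : Type*} [Fintype V] (G : SimpleGraph V) (d Δ : ℕ)
    (h : DDeltaDegenerate G d Δ) : Arrangeable G (Δ * (d - 1) + 1) := by
  classical
  obtain ⟨f, hf⟩ := h
  refine ⟨f, fun i => ?_⟩
  set A : Set V := {v : V | f.symm v ≤ i ∧ ∃ j : Fin (Fintype.card V),
      i < j ∧ G.Adj (f i) (f j) ∧ G.Adj (f j) v} with hA
  set 𝒮 : Set (Set V) := {S : Set V | ∃ j : Fin (Fintype.card V), i < j ∧ G.Adj (f j) (f i) ∧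
      S = {v : V | G.Adj (f j) v ∧ f.symm v ≤ i}} with h𝒮
  have h𝒮card : 𝒮.ncard ≤ Δ := (hf i).2
  -- each S ∈ 𝒮 contains f i and has ncard ≤ d
  have hmem : ∀ S ∈ 𝒮, f i ∈ S ∧ S.ncard ≤ d := by
    rintro S ⟨j, hij, hadj, rfl⟩
    constructor
    · exact ⟨hadj, by simp⟩
    · have hinj : Function.Injective (f.symm : V → Fin (Fintype.card V)) := f.symm.injective
      rw [← Set.ncard_image_of_injective _ hinj]
      refine le_trans (Set.ncard_le_ncard ?_ (Set.toFinite _)) (hf j).1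
      rintro k ⟨v, ⟨hv1, hv2⟩, rfl⟩
      exact ⟨lt_of_le_of_lt hv2 hij, by simpa using hv1.symm⟩
  -- A \ {f i} ⊆ ⋃₀ ((· \ {f i}) '' 𝒮)
  have hsub : A \ {f i} ⊆ ⋃₀ ((fun S => S \ {f i}) '' 𝒮) := by
    rintro v ⟨⟨hv, j, hij, hadj, hjv⟩, hvne⟩
    exact ⟨{v : V | G.Adj (f j) v ∧ f.symm v ≤ i} \ {f i},
      ⟨_, ⟨j, hij, hadj.symm, rfl⟩, rfl⟩, ⟨hjv, hv⟩, hvne⟩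
  have hbound : (A \ {f i}).ncard ≤ Δ * (d - 1) := by
    refine le_trans (Set.ncard_le_ncard hsub (Set.toFinite _)) ?_
    refine le_trans (ncard_sUnion_le' _ (Set.toFinite _) (d - 1) ?_) ?_
    · rintro T ⟨S, hS, rfl⟩
      obtain ⟨hfi, hSd⟩ := hmem S hS
      have := Set.ncard_diff_singleton_add_one hfi (Set.toFinite S)
      show (S \ {f i}).ncard ≤ d - 1
      omega
    · gcongr
      exact le_trans (Set.ncard_image_le (Set.toFinite _)) h𝒮card
  calc A.ncard ≤ (insert (f i) (A \ {f i})).ncard :=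
        Set.ncard_le_ncard (fun v hv => by
          by_cases hveq : v = f i
          · exact hveq ▸ Set.mem_insert _ _
          · exact Set.mem_insert_of_mem _ ⟨hv, hveq⟩) (Set.toFinite _)
    _ ≤ (A \ {f i}).ncard + 1 := Set.ncard_insert_le _ _
    _ ≤ Δ * (d - 1) + 1 := by omega
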